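/- Suppose for each n there is a square with vertices p₁ⁿ, p₂ⁿ, p₃ⁿ, p₄ⁿ ∈ ℝ², all contained in a fixed compact set K, with side length bounded below by a fixed ε > 0, such that pⱼⁿ ∈ im(fₙ) ∪ im(gₙ) for continuous maps fₙ, gₙ converging uniformly on compact sets to continuous maps f, g. Then there is a nondegenerate square with all four vertices in im(f) ∪ im(g). -/

import Mathlib

open Complex Filter
open Topology


lemma per_shift (h : ℝ → ℂ) (hp : ∀ x, h (x + 1) = h x + I) :
    ∀ (k : ℤ) (x : ℝ), h (x + k) = h x + k * I := by
  intro k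
  induction k using Int.induction_on with
  | zero => simp
  | succ k ih =>
    intro x
    push_cast
    rw [show x + ((k : ℝ) + 1) = (x + (k : ℝ)) + 1 by ring, hp]
    have := ih x
    push_cast at this
    rw [this]; ring
  | pred k ih =>
    intro x
    have h2 := ih (x - 1)
    push_cast
    push_cast at h2
    rw [show x + (-(k:ℝ) - 1) = (x-1) + -(k:ℝ) by ring, h2]
    have h3 := hp (x - 1)
    rw [show x - 1 + 1 = x by ring] at h3
    rw [h3]; ring

lemma unif_conv (F : ℕ → ℝ → ℂ) (f : ℝ → ℂ)
    (hFper : ∀ n x, F n (x + 1) = F n x + I) (hfper : ∀ x, f (x + 1) = f x + I)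
    (hlim : TendstoLocallyUniformly F f atTop) :
    TendstoUniformly F f atTop := by
  rw [Metric.tendstoUniformly_iff]
  intro δ hδ
  have h1 : TendstoUniformlyOn F f atTop (Set.Icc (0:ℝ) 1) :=
    (tendstoLocallyUniformlyOn_iff_tendstoUniformlyOn_of_compact isCompact_Icc).mp
      hlim.tendstoLocallyUniformlyOn
  filter_upwards [Metric.tendstoUniformlyOn_iff.mp h1 δ hδ] with n hn x
  have hx : x = Int.fract x + (⌊x⌋ : ℤ) := by
    rw [Int.fract]; push_cast; ring
  rw [hx, per_shift (F n) (hFper n), per_shift f hfper]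
  have := hn (Int.fract x) ⟨Int.fract_nonneg x, le_of_lt (Int.fract_lt_one x)⟩
  simpa using this

lemma range_closed_seq (f : ℝ → ℂ) (hfc : Continuous f) (hfper : ∀ x, f (x + 1) = f x + I)
    (x : ℕ → ℝ) (q : ℂ) (hq : Tendsto (fun n => f (x n)) atTop (𝓝 q)) :
    q ∈ Set.range f := by
  set y : ℕ → ℝ := fun n => Int.fract (x n) with hy
  set k : ℕ → ℤ := fun n => ⌊x n⌋ with hk
  have hxyk : ∀ n, f (x n) = f (y n) + (k n) * I := by
    intro n
    have hrepr : x n = y n + ((k n : ℤ) : ℝ) := by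
      rw [hy, hk]; simp only [Int.fract]; ring
    rw [hrepr, per_shift f hfper]
  -- bounds
  obtain ⟨M₁, hM₁⟩ : ∃ M, ∀ n, ‖f (x n)‖ ≤ M := by
    have := (hq.norm).bddAbove_range
    obtain ⟨M, hM⟩ := this
    exact ⟨M, fun n => hM ⟨n, rfl⟩⟩
  obtain ⟨M₂, hM₂⟩ : ∃ M, ∀ t ∈ Set.Icc (0:ℝ) 1, ‖f t‖ ≤ M :=
    isCompact_Icc.exists_bound_of_continuousOn hfc.continuousOn
  have hkb : ∀ n, |(k n : ℝ)| ≤ M₁ + M₂ := by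
    intro n
    have h1 : ((k n : ℂ)) * I = f (x n) - f (y n) := by rw [hxyk n]; ring
    have h2 : |(k n : ℝ)| = ‖((k n : ℂ)) * I‖ := by
      rw [norm_mul, Complex.norm_I, mul_one]
      norm_cast
    rw [h2, h1]
    calc ‖f (x n) - f (y n)‖ ≤ ‖f (x n)‖ + ‖f (y n)‖ := norm_sub_le _ _
      _ ≤ M₁ + M₂ := add_le_add (hM₁ n)
          (hM₂ _ ⟨Int.fract_nonneg _, le_of_lt (Int.fract_lt_one _)⟩)
  -- pigeonhole on k
  have hfin : ∀ n, k n ∈ Set.Icc (-⌈M₁ + M₂⌉) ⌈M₁ + M₂⌉ := by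
    intro n
    have := hkb n
    rw [abs_le] at this
    have hu : (k n : ℝ) ≤ ((⌈M₁ + M₂⌉ : ℤ) : ℝ) := le_trans this.2 (Int.le_ceil _)
    have hl : ((-⌈M₁ + M₂⌉ : ℤ) : ℝ) ≤ (k n : ℝ) := by
      push_cast
      linarith [Int.le_ceil (M₁ + M₂), this.1]
    exact ⟨by exact_mod_cast hl, by exact_mod_cast hu⟩
  haveI : Finite (Set.Icc (-⌈M₁ + M₂⌉) ⌈M₁ + M₂⌉ : Set ℤ) :=
    (Set.finite_Icc _ _).to_subtype
  obtain ⟨⟨c, hc⟩, hcfib⟩ := Finite.exists_infinite_fiber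
    (fun n => (⟨k n, hfin n⟩ : (Set.Icc (-⌈M₁ + M₂⌉) ⌈M₁ + M₂⌉ : Set ℤ)))
  have hfreq : ∃ᶠ n in atTop, k n = c := by
    rw [Nat.frequently_atTop_iff_infinite]
    have h3 := Set.infinite_coe_iff.mp hcfib
    apply h3.mono
    intro n hn
    simpa using congrArg Subtype.val hn
  obtain ⟨φ, hφ, hφc⟩ := extraction_of_frequently_atTop hfreq
  have hyIcc : ∀ n, y (φ n) ∈ Set.Icc (0:ℝ) 1 :=
    fun n => ⟨Int.fract_nonneg _, le_of_lt (Int.fract_lt_one _)⟩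
  obtain ⟨t, ht, ψ, hψ, hty⟩ := isCompact_Icc.tendsto_subseq hyIcc
  have hconv : Tendsto (fun n => f (x (φ (ψ n)))) atTop (𝓝 (f t + c * I)) := by
    have h1 : Tendsto (fun n => f (y (φ (ψ n))) + (c:ℂ) * I) atTop (𝓝 (f t + c * I)) :=
      ((hfc.tendsto t).comp hty).add tendsto_const_nhds
    apply h1.congr
    intro n
    rw [hxyk, hφc]
  have hconv2 : Tendsto (fun n => f (x (φ (ψ n)))) atTop (𝓝 q) :=
    hq.comp ((hφ.comp hψ).tendsto_atTop)
  have : q = f t + c * I := tendsto_nhds_unique hconv2 hconv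
  refine ⟨t + c, ?_⟩
  rw [per_shift f hfper, this]

lemma limit_mem_range (F : ℕ → ℝ → ℂ) (f : ℝ → ℂ)
    (hunif : TendstoUniformly F f atTop)
    (hfc : Continuous f) (hfper : ∀ x, f (x + 1) = f x + I)
    (m : ℕ → ℕ) (hm : Tendsto m atTop atTop)
    (q : ℕ → ℂ) (Q : ℂ) (hqQ : Tendsto q atTop (𝓝 Q))
    (hmem : ∀ n, q n ∈ Set.range (F (m n))) : Q ∈ Set.range f := by
  choose x hx using hmem
  have h1 : Tendsto (fun n => f (x n)) atTop (𝓝 Q) := by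
    rw [Metric.tendsto_atTop]
    intro δ hδ
    have e1 := (Metric.tendsto_atTop.mp hqQ) (δ/2) (by linarith)
    have e2 : ∀ᶠ n in atTop, ∀ z, dist (f z) (F (m n) z) < δ/2 :=
      hm.eventually (Metric.tendstoUniformly_iff.mp hunif (δ/2) (by linarith))
    rw [eventually_atTop] at e2
    obtain ⟨N₁, hN₁⟩ := e1
    obtain ⟨N₂, hN₂⟩ := e2
    refine ⟨max N₁ N₂, fun n hn => ?_⟩
    have t1 := hN₁ n (le_trans (le_max_left _ _) hn)
    have t2 := hN₂ n (le_trans (le_max_right _ _) hn) (x n)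
    rw [hx n] at t2
    calc dist (f (x n)) Q ≤ dist (f (x n)) (q n) + dist (q n) Q := dist_triangle _ _ _
      _ < δ/2 + δ/2 := add_lt_add t2 t1
      _ = δ := by ring
  exact range_closed_seq f hfc hfper x Q h1

lemma mem_union_of_limit (F G : ℕ → ℝ → ℂ) (f g : ℝ → ℂ)
    (hFu : TendstoUniformly F f atTop) (hGu : TendstoUniformly G g atTop)
    (hfc : Continuous f) (hgc : Continuous g)
    (hfper : ∀ x, f (x + 1) = f x + I) (hgper : ∀ x, g (x + 1) = g x + I)
    (φ : ℕ → ℕ) (hφ : StrictMono φ)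
    (p : ℕ → ℂ) (q : ℂ) (hconv : Tendsto (fun n => p (φ n)) atTop (𝓝 q))
    (hmem : ∀ n, p n ∈ Set.range (F n) ∪ Set.range (G n)) :
    q ∈ Set.range f ∪ Set.range g := by
  have hfr : (∃ᶠ n in atTop, p (φ n) ∈ Set.range (F (φ n))) ∨
      (∃ᶠ n in atTop, p (φ n) ∈ Set.range (G (φ n))) :=
    frequently_or_distrib.mp (Frequently.of_forall (fun n => hmem (φ n)))
  rcases hfr with h | h
  · left
    obtain ⟨ψ, hψ, hmem'⟩ := extraction_of_frequently_atTop h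
    exact limit_mem_range F f hFu hfc hfper (fun n => φ (ψ n))
      ((hφ.comp hψ).tendsto_atTop) (fun n => p (φ (ψ n))) q
      (hconv.comp hψ.tendsto_atTop) hmem'
  · right
    obtain ⟨ψ, hψ, hmem'⟩ := extraction_of_frequently_atTop h
    exact limit_mem_range G g hGu hgc hgper (fun n => φ (ψ n))
      ((hφ.comp hψ).tendsto_atTop) (fun n => p (φ (ψ n))) q
      (hconv.comp hψ.tendsto_atTop) hmem'


/-- suppose `fₙ, gₙ : ℝ → ℝ² ≅ ℂ` are continuous periodic curves
(`f(x+1) = f(x) + i`) converging uniformly on compact sets to continuous (periodic)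
`f, g`, and for each `n` there is a square `(p₁ⁿ, p₂ⁿ, p₄ⁿ, p₃ⁿ)` (i.e.
`p₂ⁿ = p₁ⁿ + i(p₃ⁿ − p₁ⁿ)`, `p₄ⁿ = p₃ⁿ + i(p₃ⁿ − p₁ⁿ)`) with all vertices in a fixed
compact set `K`, side length at least a fixed `ε > 0`, and all vertices on
`im(fₙ) ∪ im(gₙ)`. Then there is a nondegenerate square with all four vertices in
`im(f) ∪ im(g)`. -/
theorem limit_of_inscribed_squares
    (K : Set ℂ) (hK : IsCompact K) (ε : ℝ) (hε : 0 < ε)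
    (F G : ℕ → ℝ → ℂ) (f g : ℝ → ℂ)
    (hFc : ∀ n, Continuous (F n)) (hGc : ∀ n, Continuous (G n))
    (hfc : Continuous f) (hgc : Continuous g)
    (hFper : ∀ n x, F n (x + 1) = F n x + I) (hGper : ∀ n x, G n (x + 1) = G n x + I)
    (hfper : ∀ x, f (x + 1) = f x + I) (hgper : ∀ x, g (x + 1) = g x + I)
    (hFlim : TendstoLocallyUniformly F f atTop)
    (hGlim : TendstoLocallyUniformly G g atTop)
    (p₁ p₂ p₃ p₄ : ℕ → ℂ)
    (hsq : ∀ n, p₂ n = p₁ n + I * (p₃ n - p₁ n) ∧ p₄ n = p₃ n + I * (p₃ n - p₁ n))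
    (hKmem : ∀ n, p₁ n ∈ K ∧ p₂ n ∈ K ∧ p₃ n ∈ K ∧ p₄ n ∈ K)
    (hside : ∀ n, ε ≤ dist (p₂ n) (p₁ n))
    (hmem : ∀ n, p₁ n ∈ Set.range (F n) ∪ Set.range (G n) ∧
                 p₂ n ∈ Set.range (F n) ∪ Set.range (G n) ∧
                 p₃ n ∈ Set.range (F n) ∪ Set.range (G n) ∧
                 p₄ n ∈ Set.range (F n) ∪ Set.range (G n)) :
    ∃ q₁ q₂ q₃ q₄ : ℂ,
      q₂ = q₁ + I * (q₃ - q₁) ∧ q₄ = q₃ + I * (q₃ - q₁) ∧ q₁ ≠ q₃ ∧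
      q₁ ∈ Set.range f ∪ Set.range g ∧ q₂ ∈ Set.range f ∪ Set.range g ∧
      q₃ ∈ Set.range f ∪ Set.range g ∧ q₄ ∈ Set.range f ∪ Set.range g := by
  have hFu : TendstoUniformly F f atTop := unif_conv F f hFper hfper hFlim
  have hGu : TendstoUniformly G g atTop := unif_conv G g hGper hgper hGlim
  have hK4 : IsCompact ((K ×ˢ K) ×ˢ (K ×ˢ K)) := (hK.prod hK).prod (hK.prod hK)
  obtain ⟨⟨⟨q₁, q₂⟩, q₃, q₄⟩, _, φ, hφ, hconv⟩ :=
    hK4.tendsto_subseq (x := fun n => ((p₁ n, p₂ n), (p₃ n, p₄ n)))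
      (fun n => ⟨⟨(hKmem n).1, (hKmem n).2.1⟩, (hKmem n).2.2.1, (hKmem n).2.2.2⟩)
  have h12 : Tendsto (fun n => (p₁ (φ n), p₂ (φ n))) atTop (𝓝 (q₁, q₂)) :=
    (continuous_fst.tendsto _).comp hconv
  have h34 : Tendsto (fun n => (p₃ (φ n), p₄ (φ n))) atTop (𝓝 (q₃, q₄)) :=
    (continuous_snd.tendsto _).comp hconv
  have h1 : Tendsto (fun n => p₁ (φ n)) atTop (𝓝 q₁) := (continuous_fst.tendsto _).comp h12
  have h2 : Tendsto (fun n => p₂ (φ n)) atTop (𝓝 q₂) := (continuous_snd.tendsto _).comp h12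
  have h3 : Tendsto (fun n => p₃ (φ n)) atTop (𝓝 q₃) := (continuous_fst.tendsto _).comp h34
  have h4 : Tendsto (fun n => p₄ (φ n)) atTop (𝓝 q₄) := (continuous_snd.tendsto _).comp h34
  have hr1 : q₂ = q₁ + I * (q₃ - q₁) := by
    refine tendsto_nhds_unique h2 ?_
    have : Tendsto (fun n => p₁ (φ n) + I * (p₃ (φ n) - p₁ (φ n))) atTop
        (𝓝 (q₁ + I * (q₃ - q₁))) :=
      h1.add (tendsto_const_nhds.mul (h3.sub h1))
    exact this.congr (fun n => (hsq (φ n)).1.symm)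
  have hr2 : q₄ = q₃ + I * (q₃ - q₁) := by
    refine tendsto_nhds_unique h4 ?_
    have : Tendsto (fun n => p₃ (φ n) + I * (p₃ (φ n) - p₁ (φ n))) atTop
        (𝓝 (q₃ + I * (q₃ - q₁))) :=
      h3.add (tendsto_const_nhds.mul (h3.sub h1))
    exact this.congr (fun n => (hsq (φ n)).2.symm)
  have hdist : ε ≤ dist q₂ q₁ :=
    ge_of_tendsto (h2.dist h1) (Eventually.of_forall (fun n => hside (φ n)))
  have hne : q₁ ≠ q₃ := by
    intro h
    have hq : q₂ = q₁ := by rw [hr1, h]; ring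
    rw [hq, dist_self] at hdist
    linarith
  exact ⟨q₁, q₂, q₃, q₄, hr1, hr2, hne,
    mem_union_of_limit F G f g hFu hGu hfc hgc hfper hgper φ hφ p₁ q₁ h1
      (fun n => (hmem n).1),
    mem_union_of_limit F G f g hFu hGu hfc hgc hfper hgper φ hφ p₂ q₂ h2
      (fun n => (hmem n).2.1),
    mem_union_of_limit F G f g hFu hGu hfc hgc hfper hgper φ hφ p₃ q₃ h3
      (fun n => (hmem n).2.2.1),
    mem_union_of_limit F G f g hFu hGu hfc hgc hfper hgper φ hφ p₄ q₄ h4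
      (fun n => (hmem n).2.2.2)⟩
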